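/- (Exponential tail decay of the Modified Rician distribution.) Let α ≥ 0 and β > 0, and let X be a real random variable whose distribution is the Modified Rician distribution MR(α,β), with mean E X = α + β. Then there exist constants c₁ > 0 and c₂ > 0 (possibly depending on α and β) such that for every t ≥ 0, P( |X − E X| ≥ t ) ≤ c₁ · exp( −c₂ t ). -/

import Mathlib

open MeasureTheory Real

/-- The modified Bessel function of the first kind of order zero,
`I₀(x) = ∑_{k=0}^∞ (x/2)^{2k} / (k!)²`. -/
noncomputable def besselI0 (x : ℝ) : ℝ :=
  ∑' k : ℕ, (x / 2) ^ (2 * k) / ((Nat.factorial k : ℝ)) ^ 2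

/-- The Modified Rician density with parameters `α ≥ 0` and `β > 0`. -/
noncomputable def mrDensity (α β t : ℝ) : ℝ :=
  if 0 ≤ t then (1 / β) * Real.exp (-((t + α) / β)) * besselI0 (2 * Real.sqrt (t * α) / β)
  else 0

lemma factorial_two_mul_le (k : ℕ) :
    Nat.factorial (2 * k) ≤ 4 ^ k * (Nat.factorial k) ^ 2 := by
  induction k with
  | zero => simp
  | succ n ih =>
    calc Nat.factorial (2 * (n + 1))
        = (2 * n + 2) * ((2 * n + 1) * Nat.factorial (2 * n)) := by
          rw [show 2 * (n + 1) = 2 * n + 1 + 1 by ring, Nat.factorial_succ, Nat.factorial_succ]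
      _ ≤ (2 * n + 2) * ((2 * n + 2) * (4 ^ n * (Nat.factorial n) ^ 2)) :=
          Nat.mul_le_mul_left _ (Nat.mul_le_mul (by omega) ih)
      _ = 4 ^ (n + 1) * (Nat.factorial (n + 1)) ^ 2 := by
          rw [Nat.factorial_succ]; ring

lemma besselI0_le_exp {x : ℝ} (hx : 0 ≤ x) : besselI0 x ≤ Real.exp x := by
  have hexp : Real.exp x = ∑' n : ℕ, x ^ n / (Nat.factorial n : ℝ) := by
    rw [Real.exp_eq_exp_ℝ, NormedSpace.exp_eq_tsum_div]
  have hg : Summable (fun n : ℕ => x ^ n / (Nat.factorial n : ℝ)) :=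
    Real.summable_pow_div_factorial x
  have hinj : Function.Injective (fun k : ℕ => 2 * k) := fun a b h => by dsimp at h; omega
  have hterm : ∀ k : ℕ, (x / 2) ^ (2 * k) / ((Nat.factorial k : ℝ)) ^ 2
      ≤ x ^ (2 * k) / (Nat.factorial (2 * k) : ℝ) := by
    intro k
    have hnum : (0:ℝ) ≤ x ^ (2 * k) := pow_nonneg hx _
    have hfac : (Nat.factorial (2 * k) : ℝ) ≤ 4 ^ k * ((Nat.factorial k : ℝ)) ^ 2 := by
      exact_mod_cast factorial_two_mul_le k
    have h2 : ((2:ℝ)) ^ (2 * k) = 4 ^ k := by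
      rw [pow_mul]; norm_num
    rw [div_pow, h2, div_div]
    have hpos : (0:ℝ) < (Nat.factorial (2 * k) : ℝ) := by positivity
    exact div_le_div_of_nonneg_left hnum hpos hfac
  have hf : Summable (fun k : ℕ => (x / 2) ^ (2 * k) / ((Nat.factorial k : ℝ)) ^ 2) := by
    refine Summable.of_nonneg_of_le (fun k => by positivity) (fun k => hterm k) ?_
    exact hg.comp_injective hinj
  rw [hexp]
  exact hf.tsum_le_tsum_of_inj _ hinj (fun c _ => by positivity) hterm hg

lemma mrDensity_le {α β : ℝ} (hα : 0 ≤ α) (hβ : 0 < β) {x : ℝ} (hx : 4 * α ≤ x)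
    (hx0 : 0 ≤ x) :
    mrDensity α β x ≤ (1 / β) * Real.exp (-((1 / (4 * β)) * x)) := by
  have hne : β ≠ 0 := hβ.ne'
  unfold mrDensity
  rw [if_pos hx0]
  have harg : 0 ≤ 2 * Real.sqrt (x * α) / β := by positivity
  have h1 : besselI0 (2 * Real.sqrt (x * α) / β) ≤ Real.exp (2 * Real.sqrt (x * α) / β) :=
    besselI0_le_exp harg
  calc (1 / β) * Real.exp (-((x + α) / β)) * besselI0 (2 * Real.sqrt (x * α) / β)
      ≤ (1 / β) * Real.exp (-((x + α) / β)) * Real.exp (2 * Real.sqrt (x * α) / β) := by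
        apply mul_le_mul_of_nonneg_left h1 (by positivity)
    _ = (1 / β) * Real.exp (-((x + α) / β) + 2 * Real.sqrt (x * α) / β) := by
        rw [mul_assoc, ← Real.exp_add]
    _ ≤ (1 / β) * Real.exp (-((1 / (4 * β)) * x)) := by
        apply mul_le_mul_of_nonneg_left _ (by positivity)
        apply Real.exp_le_exp.mpr
        have hsqrt : Real.sqrt (x * α) = Real.sqrt x * Real.sqrt α := Real.sqrt_mul hx0 α
        have hs : Real.sqrt x ^ 2 = x := Real.sq_sqrt hx0
        have ha : Real.sqrt α ^ 2 = α := Real.sq_sqrt hα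
        have hsn : 0 ≤ Real.sqrt x := Real.sqrt_nonneg x
        have han : 0 ≤ Real.sqrt α := Real.sqrt_nonneg α
        rw [hsqrt,
          show -((x + α) / β) + 2 * (Real.sqrt x * Real.sqrt α) / β
            = (2 * (Real.sqrt x * Real.sqrt α) - (x + α)) / β by ring,
          show -(1 / (4 * β) * x) = (-(x / 4)) / β by field_simp]
        refine (div_le_div_iff_of_pos_right hβ).mpr ?_
        nlinarith [sq_nonneg (Real.sqrt x - 2 * Real.sqrt α)]

lemma lintegral_exp_tail {a b c : ℝ} (hb : 0 < b) (hc : 0 ≤ c) :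
    ∫⁻ x in Set.Ici a, ENNReal.ofReal (c * Real.exp (-(b * x)))
      = ENNReal.ofReal (c / b * Real.exp (-(b * a))) := by
  rw [← restrict_Ioi_eq_restrict_Ici]
  rw [← ofReal_integral_eq_lintegral_ofReal]
  · congr 1
    have h := integral_comp_mul_left_Ioi (fun x => Real.exp (-x)) a hb
    simp only [smul_eq_mul] at h
    rw [MeasureTheory.integral_const_mul, h, integral_exp_neg_Ioi]
    ring
  · have := (exp_neg_integrableOn_Ioi a hb).const_mul c
    simpa [neg_mul] using this
  · filter_upwards with x
    positivity

/-- Exponential tail decay of the Modified Rician distribution: if `X ∼ MR(α,β)`,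
with mean `E X = α + β`, then there are constants `c₁, c₂ > 0` such that
`P(|X − E X| ≥ t) ≤ c₁ exp(−c₂ t)` for all `t ≥ 0`. -/
theorem mr_exponential_tail
    {Ω : Type*} [MeasurableSpace Ω] (P : Measure Ω) [IsProbabilityMeasure P]
    (α β : ℝ) (hα : 0 ≤ α) (hβ : 0 < β)
    (X : Ω → ℝ) (hX : Measurable X)
    (hlaw : Measure.map X P
      = (volume : Measure ℝ).withDensity (fun t => ENNReal.ofReal (mrDensity α β t)))
    (hmean : ∫ ω, X ω ∂P = α + β) :
    ∃ c₁ c₂ : ℝ, 0 < c₁ ∧ 0 < c₂ ∧ ∀ t : ℝ, 0 ≤ t →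
      P {ω | t ≤ |X ω - (α + β)|} ≤ ENNReal.ofReal (c₁ * Real.exp (-c₂ * t)) := by
  set μ : ℝ := α + β with hμ
  set c₂ : ℝ := 1 / (4 * β) with hc₂
  have hc₂pos : 0 < c₂ := by positivity
  set T : ℝ := μ + 4 * α + 1 with hT
  have hTpos : 0 < T := by positivity
  set c₁ : ℝ := 4 * Real.exp (c₂ * T) with hc₁
  have hc₁pos : 0 < c₁ := by positivity
  refine ⟨c₁, c₂, hc₁pos, hc₂pos, fun t ht => ?_⟩
  by_cases hcase : t ≤ T
  · -- trivial bound by 1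
    have h1 : (1:ℝ) ≤ c₁ * Real.exp (-c₂ * t) := by
      rw [hc₁, mul_assoc, ← Real.exp_add]
      have : (0:ℝ) ≤ c₂ * T + -c₂ * t := by nlinarith
      nlinarith [Real.one_le_exp this]
    calc P {ω | t ≤ |X ω - (α + β)|} ≤ 1 := prob_le_one
      _ = ENNReal.ofReal 1 := by simp
      _ ≤ ENNReal.ofReal (c₁ * Real.exp (-c₂ * t)) := ENNReal.ofReal_le_ofReal h1
  · push_neg at hcase
    have hm : MeasurableSet {x : ℝ | t ≤ |x - μ|} := by
      have : {x : ℝ | t ≤ |x - μ|} = (fun x => |x - μ|) ⁻¹' Set.Ici t := rfl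
      rw [this]
      exact ((measurable_id.sub_const μ).abs) measurableSet_Ici
    have hmap : P {ω | t ≤ |X ω - (α + β)|} = Measure.map X P {x : ℝ | t ≤ |x - μ|} := by
      rw [Measure.map_apply hX hm]; rfl
    rw [hmap, hlaw, withDensity_apply _ hm]
    have key : ∫⁻ x in {x : ℝ | t ≤ |x - μ|}, ENNReal.ofReal (mrDensity α β x)
        ≤ ∫⁻ x in Set.Ici (μ + t), ENNReal.ofReal ((1 / β) * Real.exp (-(c₂ * x))) := by
      rw [← lintegral_indicator hm, ← lintegral_indicator measurableSet_Ici]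
      refine lintegral_mono fun x => ?_
      by_cases hxS : x ∈ {x : ℝ | t ≤ |x - μ|}
      · rw [Set.indicator_of_mem hxS]
        have hxS' : t ≤ |x - μ| := hxS
        rcases le_abs.mp hxS' with h | h
        · have hxI : x ∈ Set.Ici (μ + t) := by
            simp only [Set.mem_Ici]; linarith
          rw [Set.indicator_of_mem hxI]
          apply ENNReal.ofReal_le_ofReal
          have h4α : 4 * α ≤ x := by
            have : 4 * α ≤ μ + t := by rw [hμ]; nlinarith [hcase]
            linarith [hxI.out]
          have hmr := mrDensity_le hα hβ h4α (by linarith)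
          rw [← hc₂] at hmr
          exact hmr
        · -- x ≤ μ - t < 0, density vanishes
          have hxneg : x < 0 := by
            have : t > μ := by rw [hT] at hcase; nlinarith
            linarith
          have : mrDensity α β x = 0 := by
            unfold mrDensity; rw [if_neg (not_le.mpr hxneg)]
          rw [this]
          simp
      · rw [Set.indicator_of_notMem hxS]
        exact zero_le
    refine key.trans ?_
    rw [lintegral_exp_tail hc₂pos (by positivity)]
    apply ENNReal.ofReal_le_ofReal
    have hdiv : (1 / β) / c₂ = 4 := by rw [hc₂]; field_simp
    rw [hdiv]
    have hle : -(c₂ * (μ + t)) ≤ c₂ * T + -c₂ * t := by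
      have hμ0 : 0 ≤ μ := by positivity
      nlinarith [hc₂pos.le, hTpos.le]
    calc 4 * Real.exp (-(c₂ * (μ + t))) ≤ 4 * Real.exp (c₂ * T + -c₂ * t) := by
          have := Real.exp_le_exp.mpr hle
          linarith
      _ = c₁ * Real.exp (-c₂ * t) := by rw [hc₁, mul_assoc, Real.exp_add]
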